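/- If a nonnegative function φ on the unit disc admits a quasi-bounded positive harmonic majorant (i.e. the Poisson integral of a nonnegative L¹ function), then its non-tangential maximal function Mφ satisfies lim_{t→∞} t·σ{ ζ : Mφ(ζ) > t } = 0. -/

import Mathlib

open MeasureTheory Set
open scoped Real ENNReal

noncomputable section

def unitDisc : Set ℂ := Metric.ball 0 1
def unitCircle : Set ℂ := Metric.sphere 0 1

/-- The Poisson kernel of the unit disc. -/
def poissonK (z ζ : ℂ) : ℝ := (1 - ‖z‖ ^ 2) / ‖ζ - z‖ ^ 2

/-- The Laplacian of a function `h : ℂ → ℝ`, viewing `ℂ` as `ℝ²`. -/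
def lap (h : ℂ → ℝ) (z : ℂ) : ℝ :=
  iteratedFDeriv ℝ 2 h z ![1, 1] + iteratedFDeriv ℝ 2 h z ![Complex.I, Complex.I]

/-- `h` is harmonic on the open unit disc. -/
def HarmonicOnDisc (h : ℂ → ℝ) : Prop :=
  ContDiffOn ℝ 2 h unitDisc ∧ ∀ z ∈ unitDisc, lap h z = 0

/-- The Stolz angle of aperture `α` with vertex `exp(iθ)`. -/
def stolz (α : ℝ) (θ : ℝ) : Set ℂ :=
  {z ∈ unitDisc | ‖z - Complex.exp (θ * Complex.I)‖ ≤ α * (1 - ‖z‖ ^ 2)}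

/-- Non-tangential maximal function of `φ` (with values in `[0,∞]`). -/
def maxNT (α : ℝ) (φ : ℂ → ℝ) (θ : ℝ) : ℝ≥0∞ :=
  ⨆ z ∈ stolz α θ, ENNReal.ofReal (φ z)

namespace NTAux


/-- wrap to `[0, 2π)` -/
def wrap (s : ℝ) : ℝ := 2 * π * Int.fract (s / (2 * π))

lemma two_pi_pos : (0:ℝ) < 2 * π := by positivity

lemma wrap_eq_self {s : ℝ} (hs : s ∈ Ico 0 (2 * π)) : wrap s = s := by
  have h2 : (0:ℝ) < 2 * π := two_pi_pos
  have : Int.fract (s / (2 * π)) = s / (2 * π) := by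
    rw [Int.fract_eq_self]
    constructor
    · exact div_nonneg hs.1 h2.le
    · rw [div_lt_one h2]; exact hs.2
  rw [wrap, this]; field_simp

lemma wrap_add (s : ℝ) : wrap (s + 2 * π) = wrap s := by
  have h2 : (0:ℝ) < 2 * π := two_pi_pos
  have : (s + 2 * π) / (2 * π) = s / (2 * π) + 1 := by field_simp
  rw [wrap, this, Int.fract_add_one]; rfl

lemma measurable_wrap : Measurable wrap :=
  (measurable_fract.comp (measurable_id.div_const _)).const_mul _

/-- The (restricted) Hardy–Littlewood maximal function of an `ℝ≥0∞`-valued function. -/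
def mxl (V : ℝ → ℝ≥0∞) (θ : ℝ) : ℝ≥0∞ :=
  ⨆ r ∈ Ioc (0:ℝ) π, (∫⁻ s in Metric.closedBall θ r, V s) / ENNReal.ofReal (2 * r)

lemma lint_cb_le_mxl (V : ℝ → ℝ≥0∞) (θ : ℝ) {r : ℝ} (hr : r ∈ Ioc (0:ℝ) π) :
    ∫⁻ s in Metric.closedBall θ r, V s ≤ ENNReal.ofReal (2 * r) * mxl V θ := by
  have h := le_iSup₂ (f := fun r (_ : r ∈ Ioc (0:ℝ) π) =>
    (∫⁻ s in Metric.closedBall θ r, V s) / ENNReal.ofReal (2 * r)) r hr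
  have h20 : ENNReal.ofReal (2 * r) ≠ 0 :=
    (ENNReal.ofReal_pos.mpr (by linarith [hr.1])).ne'
  calc ∫⁻ s in Metric.closedBall θ r, V s
      = (∫⁻ s in Metric.closedBall θ r, V s) / ENNReal.ofReal (2 * r) * ENNReal.ofReal (2 * r) :=
        (ENNReal.div_mul_cancel h20 ENNReal.ofReal_ne_top).symm
    _ ≤ mxl V θ * ENNReal.ofReal (2 * r) := mul_le_mul_left h _
    _ = ENNReal.ofReal (2 * r) * mxl V θ := mul_comm _ _

lemma mxl_mono_add {V G B : ℝ → ℝ≥0∞} (hG : Measurable G)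
    (h : ∀ s, V s ≤ G s + B s) (θ : ℝ) : mxl V θ ≤ mxl G θ + mxl B θ := by
  refine iSup₂_le fun r hr => ?_
  have h1 : ∫⁻ s in Metric.closedBall θ r, V s
      ≤ (∫⁻ s in Metric.closedBall θ r, G s) + ∫⁻ s in Metric.closedBall θ r, B s := by
    calc ∫⁻ s in Metric.closedBall θ r, V s ≤ ∫⁻ s in Metric.closedBall θ r, (G s + B s) :=
          lintegral_mono h
      _ = _ := lintegral_add_left (hG.comp measurable_id) _
  calc (∫⁻ s in Metric.closedBall θ r, V s) / ENNReal.ofReal (2 * r)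
      ≤ ((∫⁻ s in Metric.closedBall θ r, G s) + ∫⁻ s in Metric.closedBall θ r, B s) /
          ENNReal.ofReal (2 * r) := ENNReal.div_le_div_right h1 _
    _ = (∫⁻ s in Metric.closedBall θ r, G s) / ENNReal.ofReal (2 * r)
        + (∫⁻ s in Metric.closedBall θ r, B s) / ENNReal.ofReal (2 * r) := ENNReal.add_div
    _ ≤ mxl G θ + mxl B θ := add_le_add (le_iSup₂ (f := fun r (_ : r ∈ Ioc (0:ℝ) π) =>
          (∫⁻ s in Metric.closedBall θ r, G s) / ENNReal.ofReal (2 * r)) r hr)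
          (le_iSup₂ (f := fun r (_ : r ∈ Ioc (0:ℝ) π) =>
          (∫⁻ s in Metric.closedBall θ r, B s) / ENNReal.ofReal (2 * r)) r hr)

lemma mxl_le_const {G : ℝ → ℝ≥0∞} {K : ℝ} (h : ∀ s, G s ≤ ENNReal.ofReal K) (θ : ℝ) :
    mxl G θ ≤ ENNReal.ofReal K := by
  refine iSup₂_le fun r hr => ?_
  have h20 : ENNReal.ofReal (2 * r) ≠ 0 :=
    (ENNReal.ofReal_pos.mpr (by linarith [hr.1])).ne'
  have h1 : ∫⁻ s in Metric.closedBall θ r, G s ≤ ENNReal.ofReal K * ENNReal.ofReal (2 * r) := by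
    calc ∫⁻ s in Metric.closedBall θ r, G s
        ≤ ∫⁻ _ in Metric.closedBall θ r, ENNReal.ofReal K := lintegral_mono h
      _ = ENNReal.ofReal K * volume (Metric.closedBall θ r) := by
          rw [setLIntegral_const]
      _ = ENNReal.ofReal K * ENNReal.ofReal (2 * r) := by rw [Real.volume_closedBall]
  calc (∫⁻ s in Metric.closedBall θ r, G s) / ENNReal.ofReal (2 * r)
      ≤ ENNReal.ofReal K * ENNReal.ofReal (2 * r) / ENNReal.ofReal (2 * r) :=
        ENNReal.div_le_div_right h1 _
    _ = ENNReal.ofReal K := by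
        rw [mul_div_assoc, ENNReal.div_self h20 ENNReal.ofReal_ne_top, mul_one]

/-- translation of lintegrals on `Ico` -/
lemma lint_Ico_shift (F : ℝ → ℝ≥0∞) (hF : Measurable F) (a b c : ℝ) :
    ∫⁻ s in Ico a b, F s = ∫⁻ s in Ico (a - c) (b - c), F (s + c) := by
  rw [← lintegral_indicator measurableSet_Ico, ← lintegral_indicator measurableSet_Ico,
    ← lintegral_add_right_eq_self (fun s => (Ico a b).indicator F s) c]
  congr 1
  funext s
  by_cases h : s ∈ Ico (a - c) (b - c)
  · have h' : s + c ∈ Ico a b := by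
      simp only [mem_Ico] at h ⊢; constructor <;> linarith [h.1, h.2]
    simp [indicator_of_mem h', indicator_of_mem h]
  · have h' : s + c ∉ Ico a b := by
      simp only [mem_Ico, not_and, not_lt] at h ⊢
      intro h1
      linarith [h (by linarith)]
    simp [indicator_of_notMem h', indicator_of_notMem h]

lemma periodic_int (F : ℝ → ℝ≥0∞) (hper : ∀ s, F (s + 2 * π) = F s) (k : ℤ) (s : ℝ) :
    F (s + 2 * π * k) = F s := by
  induction k using Int.induction_on with
  | zero => simp
  | succ n ih =>
      have : s + 2 * π * ((n : ℤ) + 1 : ℤ) = (s + 2 * π * (n : ℤ)) + 2 * π := by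
        push_cast; ring
      rw [this, hper, ih]
  | pred n ih =>
      have : (s + 2 * π * (-(n : ℤ) - 1 : ℤ)) + 2 * π = s + 2 * π * (-(n : ℤ) : ℤ) := by
        push_cast; ring
      rw [← ih, ← this, hper]

lemma lint_Ico_periodic (F : ℝ → ℝ≥0∞) (hF : Measurable F)
    (hper : ∀ s, F (s + 2 * π) = F s) (a : ℝ) :
    ∫⁻ s in Ico a (a + 2 * π), F s = ∫⁻ s in Ico 0 (2 * π), F s := by
  set T := 2 * π with hT
  have hT0 : (0:ℝ) < T := two_pi_pos
  set k : ℤ := ⌈a / T⌉ with hk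
  have h1 : a ≤ T * k := by
    rw [mul_comm, ← div_le_iff₀ hT0]; exact Int.le_ceil _
  have h2 : T * k < a + T := by
    have := Int.ceil_lt_add_one (a / T)
    have : (k:ℝ) < a / T + 1 := this
    calc T * k < T * (a / T + 1) := by exact (mul_lt_mul_iff_right₀ hT0).mpr this
      _ = a + T := by field_simp
  have hsplit : Ico a (a + T) = Ico a (T * k) ∪ Ico (T * k) (a + T) :=
    (Ico_union_Ico_eq_Ico h1 h2.le).symm
  have hdisj : Disjoint (Ico a (T * k)) (Ico (T * k) (a + T)) := Ico_disjoint_Ico_same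
  have e1 : ∫⁻ s in Ico a (T * k), F s = ∫⁻ s in Ico (a + T - T * k) T, F s := by
    rw [lint_Ico_shift F hF a (T * k) (T * (k - 1))]
    have ha : a - T * (k - 1) = a + T - T * k := by ring
    have hb : T * k - T * (k - 1) = T := by ring
    rw [ha, hb]
    congr 1; funext s
    have : T * (k - 1) = 2 * π * ((k : ℤ) - 1 : ℤ) := by push_cast [hT]; ring
    rw [this, periodic_int F hper]
  have e2 : ∫⁻ s in Ico (T * k) (a + T), F s = ∫⁻ s in Ico 0 (a + T - T * k), F s := by
    rw [lint_Ico_shift F hF (T * k) (a + T) (T * k)]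
    have ha : T * k - T * k = 0 := by ring
    rw [ha]
    congr 1; funext s
    have : T * k = 2 * π * (k : ℤ) := by rw [hT]
    rw [this, periodic_int F hper]
  have hmid : 0 ≤ a + T - T * k ∧ a + T - T * k ≤ T := ⟨by linarith, by linarith⟩
  rw [hsplit, lintegral_union measurableSet_Ico hdisj, e1, e2, add_comm,
    ← lintegral_union measurableSet_Ico Ico_disjoint_Ico_same,
    Ico_union_Ico_eq_Ico hmid.1 hmid.2]

lemma kernel_arith {α ρ d D : ℝ} (hα : 1 < α) (hρ0 : 0 < ρ) (hd0 : 0 ≤ d)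
    (hDρ : ρ / 2 ≤ D) (hD2 : d - α * ρ ≤ D) :
    ρ / D ^ 2 ≤ 4 * (1 + 4 * α ^ 2) * (ρ / (ρ ^ 2 + d ^ 2)) := by
  have hD0 : 0 < D := lt_of_lt_of_le (by positivity) hDρ
  rw [div_le_iff₀ (by positivity)]
  have key : ρ ^ 2 + d ^ 2 ≤ 4 * (1 + 4 * α ^ 2) * D ^ 2 := by
    rcases le_or_gt d (2 * α * ρ) with h | h
    · have h1 : (ρ / 2) ^ 2 ≤ D ^ 2 := by nlinarith
      have h2 : d ^ 2 ≤ 4 * (α ^ 2 * ρ ^ 2) := by nlinarith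
      have h3 : 4 * (1 + 4 * α ^ 2) * (ρ / 2) ^ 2 ≤ 4 * (1 + 4 * α ^ 2) * D ^ 2 :=
        mul_le_mul_of_nonneg_left h1 (by positivity)
      have h4 : 4 * (1 + 4 * α ^ 2) * (ρ / 2) ^ 2 = ρ ^ 2 + 4 * (α ^ 2 * ρ ^ 2) := by ring
      linarith [h3, h4, h2]
    · have hDd : d / 2 ≤ D := by nlinarith
      have hρd : ρ ≤ d / 2 := by nlinarith
      have h1 : (d / 2) ^ 2 ≤ D ^ 2 := by nlinarith
      have h3 : 4 * (1 + 4 * α ^ 2) * (d / 2) ^ 2 ≤ 4 * (1 + 4 * α ^ 2) * D ^ 2 :=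
        mul_le_mul_of_nonneg_left h1 (by positivity)
      have h4 : 4 * (1 + 4 * α ^ 2) * (d / 2) ^ 2 = d ^ 2 + 4 * (α ^ 2 * d ^ 2) := by ring
      have hρd2 : ρ ^ 2 ≤ (d / 2) ^ 2 := by nlinarith
      have h6 : 1 / 4 * d ^ 2 ≤ 4 * (α ^ 2 * d ^ 2) := by
        nlinarith [mul_nonneg (by nlinarith : (0:ℝ) ≤ 4 * α ^ 2 - 1 / 4) (sq_nonneg d)]
      have h7 : ρ ^ 2 + d ^ 2 ≤ d ^ 2 + 4 * (α ^ 2 * d ^ 2) := by nlinarith [hρd2, h6]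
      linarith [h3, h4, h7]
  have hpos : (0:ℝ) < ρ ^ 2 + d ^ 2 := by positivity
  have heq : 4 * (1 + 4 * α ^ 2) * (ρ / (ρ ^ 2 + d ^ 2)) * D ^ 2
      = 4 * (1 + 4 * α ^ 2) * ρ * D ^ 2 / (ρ ^ 2 + d ^ 2) := by ring
  rw [heq, le_div_iff₀ hpos]
  nlinarith [mul_le_mul_of_nonneg_left key hρ0.le]

lemma kernel_est {α : ℝ} (hα : 1 < α) {z : ℂ} (hz : ‖z‖ < 1) {θ s : ℝ}
    (hst : ‖z - Complex.exp (θ * Complex.I)‖ ≤ α * (1 - ‖z‖ ^ 2)) :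
    (1 - ‖z‖ ^ 2) / ‖Complex.exp (s * Complex.I) - z‖ ^ 2 ≤
      4 * (1 + 4 * α ^ 2) *
        ((1 - ‖z‖ ^ 2) /
          ((1 - ‖z‖ ^ 2) ^ 2 + ‖Complex.exp (s * Complex.I) - Complex.exp (θ * Complex.I)‖ ^ 2)) := by
  have hz0 : 0 ≤ ‖z‖ := norm_nonneg _
  have hρ0 : 0 < 1 - ‖z‖ ^ 2 := by nlinarith
  have hes : ‖Complex.exp (s * Complex.I)‖ = 1 := by
    simpa using Complex.norm_exp_ofReal_mul_I s
  have hD1 : 1 - ‖z‖ ≤ ‖Complex.exp (s * Complex.I) - z‖ := by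
    calc 1 - ‖z‖ = ‖Complex.exp (s * Complex.I)‖ - ‖z‖ := by rw [hes]
      _ ≤ _ := norm_sub_norm_le _ _
  have hDρ : (1 - ‖z‖ ^ 2) / 2 ≤ ‖Complex.exp (s * Complex.I) - z‖ := by nlinarith
  have hD2 : ‖Complex.exp (s * Complex.I) - Complex.exp (θ * Complex.I)‖ - α * (1 - ‖z‖ ^ 2)
      ≤ ‖Complex.exp (s * Complex.I) - z‖ := by
    have h := norm_sub_le_norm_sub_add_norm_sub (Complex.exp (s * Complex.I)) z
      (Complex.exp (θ * Complex.I))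
    linarith [h, hst]
  exact kernel_arith hα hρ0 (norm_nonneg _) hDρ hD2

/-- chordal distance lower bound -/
lemma chord_sq_eq (u : ℝ) : ‖Complex.exp (u * Complex.I) - 1‖ ^ 2 = 2 - 2 * Real.cos u := by
  rw [← Complex.normSq_eq_norm_sq]
  rw [Complex.exp_mul_I]
  have h1 : Complex.cos u = (Real.cos u : ℂ) := (Complex.ofReal_cos u).symm
  have h2 : Complex.sin u = (Real.sin u : ℂ) := (Complex.ofReal_sin u).symm
  rw [h1, h2]
  rw [Complex.normSq_apply]
  simp only [Complex.add_re, Complex.sub_re, Complex.ofReal_re, Complex.mul_re, Complex.I_re,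
    Complex.ofReal_im, Complex.I_im, Complex.add_im, Complex.sub_im, Complex.mul_im,
    Complex.one_re, Complex.one_im]
  have := Real.sin_sq_add_cos_sq u
  ring_nf
  nlinarith [this]

lemma chord_lower {u : ℝ} (hu : |u| ≤ π) :
    (2 / π) ^ 2 * u ^ 2 ≤ ‖Complex.exp (u * Complex.I) - 1‖ ^ 2 := by
  rw [chord_sq_eq]
  have h := Real.cos_le_one_sub_mul_cos_sq hu
  have hπ : (0:ℝ) < π := Real.pi_pos
  have : (2 / π) ^ 2 * u ^ 2 = 2 * (2 / π ^ 2 * u ^ 2) := by field_simp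
  rw [this]
  linarith

lemma chord_diff (θ s : ℝ) :
    ‖Complex.exp (s * Complex.I) - Complex.exp (θ * Complex.I)‖
      = ‖Complex.exp (((s : ℂ) - (θ : ℂ)) * Complex.I) - 1‖ := by
  have : Complex.exp (s * Complex.I) - Complex.exp (θ * Complex.I)
      = Complex.exp (θ * Complex.I) * (Complex.exp (((s : ℂ) - (θ : ℂ)) * Complex.I) - 1) := by
    rw [mul_sub, mul_one, ← Complex.exp_add]
    congr 2
    push_cast
    ring
  rw [this, norm_mul]
  have : ‖Complex.exp ((θ:ℂ) * Complex.I)‖ = 1 := by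
    simpa using Complex.norm_exp_ofReal_mul_I θ
  rw [this, one_mul]

lemma dyadic (V : ℝ → ℝ≥0∞) (hV : Measurable V) (θ : ℝ) {ρ : ℝ}
    (hρ0 : 0 < ρ) (hρπ : ρ ≤ π) :
    ∫⁻ s in Ico (θ - π) (θ + π),
        ENNReal.ofReal (ρ / (ρ ^ 2 + (2 / π) ^ 2 * (s - θ) ^ 2)) * V s
      ≤ ENNReal.ofReal (4 * π ^ 2) * mxl V θ := by
  have hπ : (0:ℝ) < π := Real.pi_pos
  set A : ℕ → Set ℝ := fun j =>
    Metric.closedBall θ (min (2 ^ j * ρ) π) \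
      (if j = 0 then ∅ else Metric.closedBall θ (2 ^ (j - 1) * ρ)) with hA
  have hAmem : ∀ j s, s ∈ A j ↔ (|s - θ| ≤ min (2 ^ j * ρ) π ∧
      (j = 0 ∨ ¬ |s - θ| ≤ 2 ^ (j - 1) * ρ)) := by
    intro j s
    by_cases h : j = 0 <;>
      simp [hA, h, Metric.mem_closedBall, Real.dist_eq]
  have cover : Ico (θ - π) (θ + π) ⊆ ⋃ j, A j := by
    intro s hs
    have hu : |s - θ| ≤ π := by
      rw [abs_le]; exact ⟨by linarith [hs.1], by linarith [hs.2]⟩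
    by_cases h0 : |s - θ| ≤ ρ
    · exact mem_iUnion.mpr ⟨0, (hAmem 0 s).mpr ⟨by simp [le_min (by simpa using h0) hu,
        min_le_iff], Or.inl rfl⟩⟩
    · have hex : ∃ j : ℕ, |s - θ| ≤ 2 ^ j * ρ := by
        obtain ⟨n, hn⟩ := pow_unbounded_of_one_lt (|s - θ| / ρ) (by norm_num : (1:ℝ) < 2)
        exact ⟨n, by rw [div_lt_iff₀ hρ0] at hn; linarith⟩
      set j := Nat.find hex with hj
      have hjs : |s - θ| ≤ 2 ^ j * ρ := Nat.find_spec hex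
      have hj0 : j ≠ 0 := by
        intro h; apply h0
        have := hjs; rw [h] at this; simpa using this
      have hjm : ¬ |s - θ| ≤ 2 ^ (j - 1) * ρ :=
        Nat.find_min hex (Nat.sub_lt (Nat.pos_of_ne_zero hj0) one_pos)
      exact mem_iUnion.mpr ⟨j, (hAmem j s).mpr ⟨le_min hjs hu, Or.inr hjm⟩⟩
  have hAm : ∀ j, MeasurableSet (A j) := by
    intro j
    refine measurableSet_closedBall.diff ?_
    split
    · exact MeasurableSet.empty
    · exact measurableSet_closedBall
  have perterm : ∀ j : ℕ, (∫⁻ s in A j,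
      ENNReal.ofReal (ρ / (ρ ^ 2 + (2 / π) ^ 2 * (s - θ) ^ 2)) * V s)
      ≤ ENNReal.ofReal (2 * π ^ 2) * mxl V θ * (2 : ℝ≥0∞)⁻¹ ^ j := by
    intro j
    have hrj : min ((2:ℝ) ^ j * ρ) π ∈ Ioc (0:ℝ) π :=
      ⟨lt_min (by positivity) hπ, min_le_right _ _⟩
    have hkb : ∀ s ∈ A j, ENNReal.ofReal (ρ / (ρ ^ 2 + (2 / π) ^ 2 * (s - θ) ^ 2))
        ≤ ENNReal.ofReal (π ^ 2 / (4 ^ j * ρ)) := by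
      intro s hsA
      apply ENNReal.ofReal_le_ofReal
      obtain ⟨h1, h2⟩ := (hAmem j s).mp hsA
      rcases h2 with h2 | h2
      · subst h2
        calc ρ / (ρ ^ 2 + (2 / π) ^ 2 * (s - θ) ^ 2) ≤ ρ / ρ ^ 2 := by
              apply div_le_div_of_nonneg_left hρ0.le (by positivity)
              nlinarith [sq_nonneg ((2/π) * (s - θ))]
          _ = 1 / ρ := by field_simp
          _ ≤ π ^ 2 / (4 ^ 0 * ρ) := by
              rw [pow_zero, one_mul]
              gcongr
              nlinarith [Real.pi_gt_three]
      · push_neg at h2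
        have hd2 : (2 ^ (j - 1) * ρ) ^ 2 ≤ (s - θ) ^ 2 := by
          have h := mul_self_le_mul_self (by positivity : (0:ℝ) ≤ 2 ^ (j - 1) * ρ) h2.le
          nlinarith [sq_abs (s - θ), h]
        have hden : 4 ^ j * ρ ^ 2 / π ^ 2 ≤ ρ ^ 2 + (2 / π) ^ 2 * (s - θ) ^ 2 := by
          have h1' : |s - θ| ≤ 2 ^ j * ρ := le_trans h1 (min_le_left _ _)
          have hj1 : 1 ≤ j := by
            by_contra hc
            push_neg at hc
            interval_cases j
            norm_num at h1' h2
            linarith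
          have hpow : ((2:ℝ) ^ (j - 1)) ^ 2 * 4 = (4:ℝ) ^ j := by
            obtain ⟨m, rfl⟩ : ∃ m, j = m + 1 := ⟨j - 1, by omega⟩
            have e1 : ((2:ℝ) ^ (m + 1 - 1)) = 2 ^ m := by norm_num
            have e2 : ((2:ℝ) ^ m) ^ 2 = 4 ^ m := by
              rw [← pow_mul, mul_comm, pow_mul]; norm_num
            rw [e1, e2, pow_succ]
          have h3 : (2 / π) ^ 2 * (s - θ) ^ 2 ≥ (2 / π) ^ 2 * (2 ^ (j - 1) * ρ) ^ 2 :=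
            mul_le_mul_of_nonneg_left hd2 (by positivity)
          have h4 : (2 / π) ^ 2 * (2 ^ (j - 1) * ρ) ^ 2 = 4 ^ j * ρ ^ 2 / π ^ 2 := by
            field_simp
            nlinarith [hpow]
          nlinarith [h3, h4, sq_nonneg ρ]
        calc ρ / (ρ ^ 2 + (2 / π) ^ 2 * (s - θ) ^ 2) ≤ ρ / (4 ^ j * ρ ^ 2 / π ^ 2) :=
              div_le_div_of_nonneg_left hρ0.le (by positivity) hden
          _ = π ^ 2 / (4 ^ j * ρ) := by
              rw [div_div_eq_mul_div]
              rw [eq_div_iff (by positivity)]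
              field_simp
    calc ∫⁻ s in A j, ENNReal.ofReal (ρ / (ρ ^ 2 + (2 / π) ^ 2 * (s - θ) ^ 2)) * V s
        ≤ ∫⁻ s in A j, ENNReal.ofReal (π ^ 2 / (4 ^ j * ρ)) * V s :=
          setLIntegral_mono' (hAm j) (fun s hs => mul_le_mul_left (hkb s hs) _)
      _ = ENNReal.ofReal (π ^ 2 / (4 ^ j * ρ)) * ∫⁻ s in A j, V s := lintegral_const_mul _ hV
      _ ≤ ENNReal.ofReal (π ^ 2 / (4 ^ j * ρ)) *
            ∫⁻ s in Metric.closedBall θ (min (2 ^ j * ρ) π), V s := by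
          apply mul_le_mul_right
          exact lintegral_mono_set diff_subset
      _ ≤ ENNReal.ofReal (π ^ 2 / (4 ^ j * ρ)) *
            (ENNReal.ofReal (2 * min (2 ^ j * ρ) π) * mxl V θ) :=
          mul_le_mul_right (lint_cb_le_mxl V θ hrj) _
      _ = ENNReal.ofReal (π ^ 2 / (4 ^ j * ρ)) * ENNReal.ofReal (2 * min (2 ^ j * ρ) π)
            * mxl V θ := by ring
      _ ≤ ENNReal.ofReal (2 * π ^ 2 * (2 ^ j)⁻¹) * mxl V θ := by
          apply mul_le_mul_left
          rw [← ENNReal.ofReal_mul (by positivity)]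
          apply ENNReal.ofReal_le_ofReal
          have hmin : min ((2:ℝ) ^ j * ρ) π ≤ 2 ^ j * ρ := min_le_left _ _
          have h4 : (4:ℝ) ^ j = (2 ^ j) ^ 2 := by
            rw [← pow_mul, mul_comm, pow_mul]; norm_num
          calc π ^ 2 / (4 ^ j * ρ) * (2 * min (2 ^ j * ρ) π)
              ≤ π ^ 2 / (4 ^ j * ρ) * (2 * (2 ^ j * ρ)) := by
                apply mul_le_mul_of_nonneg_left _ (by positivity)
                linarith
            _ = 2 * π ^ 2 * (2 ^ j)⁻¹ := by
                rw [h4]; field_simp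
      _ = ENNReal.ofReal (2 * π ^ 2) * mxl V θ * (2 : ℝ≥0∞)⁻¹ ^ j := by
          rw [ENNReal.ofReal_mul (by positivity)]
          have : ENNReal.ofReal ((2 ^ j : ℝ)⁻¹) = (2 : ℝ≥0∞)⁻¹ ^ j := by
            rw [← inv_pow, ENNReal.ofReal_pow (by norm_num)]
            congr 1
            rw [ENNReal.ofReal_inv_of_pos (by norm_num)]
            norm_num
          rw [this]; ring
  calc ∫⁻ s in Ico (θ - π) (θ + π),
        ENNReal.ofReal (ρ / (ρ ^ 2 + (2 / π) ^ 2 * (s - θ) ^ 2)) * V s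
      ≤ ∫⁻ s in ⋃ j, A j,
          ENNReal.ofReal (ρ / (ρ ^ 2 + (2 / π) ^ 2 * (s - θ) ^ 2)) * V s :=
        lintegral_mono_set cover
    _ ≤ ∑' j, ∫⁻ s in A j,
          ENNReal.ofReal (ρ / (ρ ^ 2 + (2 / π) ^ 2 * (s - θ) ^ 2)) * V s :=
        lintegral_iUnion_le _ _
    _ ≤ ∑' j : ℕ, ENNReal.ofReal (2 * π ^ 2) * mxl V θ * (2 : ℝ≥0∞)⁻¹ ^ j :=
        ENNReal.tsum_le_tsum perterm
    _ = ENNReal.ofReal (2 * π ^ 2) * mxl V θ * ∑' j : ℕ, (2 : ℝ≥0∞)⁻¹ ^ j :=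
        ENNReal.tsum_mul_left
    _ = ENNReal.ofReal (4 * π ^ 2) * mxl V θ := by
        rw [ENNReal.tsum_geometric]
        have h2 : (1 : ℝ≥0∞) - 2⁻¹ = 2⁻¹ := by
          rw [ENNReal.sub_eq_of_eq_add (by norm_num)]
          rw [ENNReal.inv_two_add_inv_two]
        rw [h2, inv_inv]
        have h3 : ENNReal.ofReal (2 * π ^ 2) * 2 = ENNReal.ofReal (4 * π ^ 2) := by
          rw [← ENNReal.ofReal_ofNat 2, ← ENNReal.ofReal_mul (by positivity)]
          congr 1
          ring
        calc ENNReal.ofReal (2 * π ^ 2) * mxl V θ * 2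
            = ENNReal.ofReal (2 * π ^ 2) * 2 * mxl V θ := by ring
          _ = ENNReal.ofReal (4 * π ^ 2) * mxl V θ := by rw [h3]

def WW (w : ℝ → ℝ) : ℝ → ℝ≥0∞ := fun s => ENNReal.ofReal (w (wrap s))

lemma ofReal_int_le {μ : Measure ℝ} (f : ℝ → ℝ) (hf : ∀ x, 0 ≤ f x) :
    ENNReal.ofReal (∫ x, f x ∂μ) ≤ ∫⁻ x, ENNReal.ofReal (f x) ∂μ := by
  calc ENNReal.ofReal (∫ x, f x ∂μ) ≤ ‖∫ x, f x ∂μ‖ₑ := Real.ofReal_le_enorm _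
    _ ≤ ∫⁻ x, ‖f x‖ₑ ∂μ := enorm_integral_le_lintegral_enorm _
    _ = ∫⁻ x, ENNReal.ofReal (f x) ∂μ := lintegral_congr fun x => Real.enorm_eq_ofReal (hf x)

lemma measurable_WW {w : ℝ → ℝ} (hw : Measurable w) : Measurable (WW w) :=
  ENNReal.measurable_ofReal.comp (hw.comp measurable_wrap)

lemma maxNT_le_mxl {α : ℝ} (hα : 1 < α) (φ : ℂ → ℝ) (w : ℝ → ℝ)
    (hw : ∀ θ, 0 ≤ w θ) (hwmeas : Measurable w)
    (hmaj : ∀ z ∈ unitDisc, φ z ≤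
      (2 * π)⁻¹ * ∫ s in Ico 0 (2 * π), poissonK z (Complex.exp (s * Complex.I)) * w s)
    (θ : ℝ) :
    maxNT α φ θ ≤ ENNReal.ofReal (8 * π * (1 + 4 * α ^ 2)) * mxl (WW w) θ := by
  have hπ : (0:ℝ) < π := Real.pi_pos
  refine iSup₂_le fun z hz => ?_
  have hzd : z ∈ unitDisc := hz.1
  have hzs : ‖z - Complex.exp (θ * Complex.I)‖ ≤ α * (1 - ‖z‖ ^ 2) := hz.2
  have hznorm : ‖z‖ < 1 := by simpa [unitDisc, mem_ball_zero_iff] using hzd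
  have hρ0 : (0:ℝ) < 1 - ‖z‖ ^ 2 := by nlinarith [norm_nonneg z]
  have hρπ : 1 - ‖z‖ ^ 2 ≤ π := by nlinarith [norm_nonneg z, Real.pi_gt_three]
  have hpK : ∀ s : ℝ, 0 ≤ poissonK z (Complex.exp (s * Complex.I)) := fun s =>
    div_nonneg hρ0.le (by positivity)
  -- the intermediate kernel
  set ρ : ℝ := 1 - ‖z‖ ^ 2 with hρdef
  have hFcont : Continuous fun s : ℝ =>
      4 * (1 + 4 * α ^ 2) * (ρ / (ρ ^ 2 + ‖Complex.exp (s * Complex.I) - Complex.exp (θ * Complex.I)‖ ^ 2)) := by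
    apply continuous_const.mul
    apply continuous_const.div
    · apply continuous_const.add
      apply Continuous.pow
      apply Continuous.norm
      apply Continuous.sub _ continuous_const
      exact Complex.continuous_exp.comp ((Complex.continuous_ofReal).mul continuous_const)
    · intro s
      positivity
  set F : ℝ → ℝ≥0∞ := fun s =>
    ENNReal.ofReal (4 * (1 + 4 * α ^ 2) *
      (ρ / (ρ ^ 2 + ‖Complex.exp (s * Complex.I) - Complex.exp (θ * Complex.I)‖ ^ 2))) * WW w s
    with hFdef
  have hFmeas : Measurable F :=
    (ENNReal.measurable_ofReal.comp hFcont.measurable).mul (measurable_WW hwmeas)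
  have hFper : ∀ s, F (s + 2 * π) = F s := by
    intro s
    have hexp : Complex.exp ((↑(s + 2 * π)) * Complex.I) = Complex.exp (s * Complex.I) := by
      push_cast
      rw [add_mul, Complex.exp_add, Complex.exp_two_pi_mul_I, mul_one]
    simp only [hFdef, WW, wrap_add, hexp]
  calc ENNReal.ofReal (φ z)
      ≤ ENNReal.ofReal ((2 * π)⁻¹ *
          ∫ s in Ico 0 (2 * π), poissonK z (Complex.exp (s * Complex.I)) * w s) :=
        ENNReal.ofReal_le_ofReal (hmaj z hzd)
    _ = ENNReal.ofReal (2 * π)⁻¹ * ENNReal.ofReal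
          (∫ s in Ico 0 (2 * π), poissonK z (Complex.exp (s * Complex.I)) * w s) :=
        ENNReal.ofReal_mul (by positivity)
    _ ≤ ENNReal.ofReal (2 * π)⁻¹ * ∫⁻ s in Ico 0 (2 * π),
          ENNReal.ofReal (poissonK z (Complex.exp (s * Complex.I)) * w s) :=
        mul_le_mul_right (ofReal_int_le _ fun s => mul_nonneg (hpK s) (hw s)) _
    _ = ENNReal.ofReal (2 * π)⁻¹ * ∫⁻ s in Ico 0 (2 * π),
          ENNReal.ofReal (poissonK z (Complex.exp (s * Complex.I))) * WW w s := by
        congr 1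
        refine setLIntegral_congr_fun measurableSet_Ico (fun s hs => ?_)
        rw [ENNReal.ofReal_mul (hpK s)]
        congr 1
        simp only [WW, wrap_eq_self hs]
    _ ≤ ENNReal.ofReal (2 * π)⁻¹ * ∫⁻ s in Ico 0 (2 * π), F s := by
        apply mul_le_mul_right
        apply lintegral_mono
        intro s
        apply mul_le_mul_left
        apply ENNReal.ofReal_le_ofReal
        exact kernel_est hα hznorm hzs
    _ = ENNReal.ofReal (2 * π)⁻¹ * ∫⁻ s in Ico (θ - π) (θ + π), F s := by
        congr 1
        rw [← lint_Ico_periodic F hFmeas hFper (θ - π)]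
        congr 2
        ring
    _ ≤ ENNReal.ofReal (2 * π)⁻¹ * ∫⁻ s in Ico (θ - π) (θ + π),
          ENNReal.ofReal (4 * (1 + 4 * α ^ 2)) *
            (ENNReal.ofReal (ρ / (ρ ^ 2 + (2 / π) ^ 2 * (s - θ) ^ 2)) * WW w s) := by
        apply mul_le_mul_right
        refine setLIntegral_mono' measurableSet_Ico fun s hs => ?_
        have hu : |s - θ| ≤ π := by
          rw [abs_le]; exact ⟨by linarith [hs.1], by linarith [hs.2]⟩
        have hchord : (2 / π) ^ 2 * (s - θ) ^ 2
            ≤ ‖Complex.exp (s * Complex.I) - Complex.exp (θ * Complex.I)‖ ^ 2 := by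
          have h := chord_lower (u := s - θ) hu
          rw [Complex.ofReal_sub] at h
          rw [chord_diff θ s]
          exact h
        rw [hFdef]
        simp only []
        rw [ENNReal.ofReal_mul (by positivity : (0:ℝ) ≤ 4 * (1 + 4 * α ^ 2)), mul_assoc]
        apply mul_le_mul_right
        apply mul_le_mul_left
        apply ENNReal.ofReal_le_ofReal
        apply div_le_div_of_nonneg_left hρ0.le (by positivity)
        linarith
    _ = ENNReal.ofReal (2 * π)⁻¹ * (ENNReal.ofReal (4 * (1 + 4 * α ^ 2)) *
          ∫⁻ s in Ico (θ - π) (θ + π),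
            ENNReal.ofReal (ρ / (ρ ^ 2 + (2 / π) ^ 2 * (s - θ) ^ 2)) * WW w s) := by
        congr 1
        apply lintegral_const_mul
        refine Measurable.mul ?_ (measurable_WW hwmeas)
        apply ENNReal.measurable_ofReal.comp
        apply Measurable.div measurable_const
        apply Measurable.add measurable_const
        exact (measurable_const.mul (((measurable_id.sub_const θ).pow_const 2))).comp measurable_id
    _ ≤ ENNReal.ofReal (2 * π)⁻¹ * (ENNReal.ofReal (4 * (1 + 4 * α ^ 2)) *
          (ENNReal.ofReal (4 * π ^ 2) * mxl (WW w) θ)) := by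
        apply mul_le_mul_right
        apply mul_le_mul_right
        exact dyadic (WW w) (measurable_WW hwmeas) θ hρ0 hρπ
    _ = ENNReal.ofReal (8 * π * (1 + 4 * α ^ 2)) * mxl (WW w) θ := by
        rw [← mul_assoc, ← mul_assoc, ← ENNReal.ofReal_mul (by positivity),
          ← ENNReal.ofReal_mul (by positivity)]
        congr 2
        field_simp
        ring

lemma weak_type (B : ℝ → ℝ≥0∞) (hB : Measurable B) (hper : ∀ s, B (s + 2 * π) = B s)
    {t : ℝ} (ht : 0 < t) :
    volume {θ ∈ Ico 0 (2 * π) | ENNReal.ofReal t < mxl B θ}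
      ≤ ENNReal.ofReal (8 / t) * ∫⁻ s in Ico 0 (2 * π), B s := by
  have hπ : (0:ℝ) < π := Real.pi_pos
  set E := {θ ∈ Ico 0 (2 * π) | ENNReal.ofReal t < mxl B θ} with hE
  have hsel : ∀ θ ∈ E, ∃ r, r ∈ Ioc (0:ℝ) π ∧
      ENNReal.ofReal t < (∫⁻ s in Metric.closedBall θ r, B s) / ENNReal.ofReal (2 * r) := by
    intro θ hθ
    have h := hθ.2
    simp only [mxl, lt_iSup_iff] at h
    obtain ⟨r, hrS, hr⟩ := h
    exact ⟨r, hrS, hr⟩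
  choose! r hrS hrB using hsel
  obtain ⟨u, huE, hdisj, hcov⟩ := Vitali.exists_disjoint_subfamily_covering_enlargement_closedBall
    E id r π (fun θ hθ => (hrS θ hθ).2) 4 (by norm_num)
  simp only [id_eq] at hdisj hcov
  have hucnt : u.Countable := by
    apply hdisj.countable_of_nonempty_interior
    intro θ hθ
    rw [interior_closedBall _ (ne_of_gt (hrS θ (huE hθ)).1)]
    exact ⟨θ, by simpa [Metric.mem_ball] using (hrS θ (huE hθ)).1⟩
  have hEsub : E ⊆ ⋃ b ∈ u, Metric.closedBall (id b) (4 * r b) := by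
    intro θ hθ
    obtain ⟨b, hb, hsub⟩ := hcov θ hθ
    exact mem_biUnion hb (hsub (Metric.mem_closedBall_self (hrS θ hθ).1.le))
  have hball : ∀ b ∈ u, ENNReal.ofReal (8 * r b)
      ≤ ENNReal.ofReal (4 / t) * ∫⁻ s in Metric.closedBall b (r b), B s := by
    intro b hb
    have hrb := hrS b (huE hb)
    have h1 : ENNReal.ofReal t * ENNReal.ofReal (2 * r b)
        ≤ ∫⁻ s in Metric.closedBall b (r b), B s := by
      have h2 := (hrB b (huE hb)).le
      calc ENNReal.ofReal t * ENNReal.ofReal (2 * r b)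
          ≤ (∫⁻ s in Metric.closedBall b (r b), B s) / ENNReal.ofReal (2 * r b)
            * ENNReal.ofReal (2 * r b) := mul_le_mul_left h2 _
        _ = ∫⁻ s in Metric.closedBall b (r b), B s :=
            ENNReal.div_mul_cancel ((ENNReal.ofReal_pos.mpr (by linarith [hrb.1])).ne')
              ENNReal.ofReal_ne_top
    calc ENNReal.ofReal (8 * r b)
        = ENNReal.ofReal (4 / t) * (ENNReal.ofReal t * ENNReal.ofReal (2 * r b)) := by
          rw [← ENNReal.ofReal_mul ht.le, ← ENNReal.ofReal_mul (by positivity)]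
          congr 1
          field_simp
          ring
      _ ≤ ENNReal.ofReal (4 / t) * ∫⁻ s in Metric.closedBall b (r b), B s :=
          mul_le_mul_right h1 _
  have hsum : ∑' b : u, ∫⁻ s in Metric.closedBall (b : ℝ) (r b), B s
      ≤ 2 * ∫⁻ s in Ico 0 (2 * π), B s := by
    set μ' := volume.withDensity B with hμ'
    have happ : ∀ (A : Set ℝ), MeasurableSet A → μ' A = ∫⁻ s in A, B s := fun A hA =>
      withDensity_apply B hA
    have h1 : μ' (⋃ b ∈ u, Metric.closedBall b (r b))
        = ∑' b : u, ∫⁻ s in Metric.closedBall (b : ℝ) (r b), B s := by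
      rw [measure_biUnion hucnt hdisj fun b _ => measurableSet_closedBall]
      exact tsum_congr fun b => happ _ measurableSet_closedBall
    have h2 : (⋃ b ∈ u, Metric.closedBall b (r b)) ⊆ Icc (-π) (3 * π) := by
      refine iUnion₂_subset fun b hb => ?_
      have hbmem := (huE hb).1
      have hrb := hrS b (huE hb)
      rw [mem_Ico] at hbmem
      intro x hx
      rw [Metric.mem_closedBall, Real.dist_eq, abs_le] at hx
      rw [mem_Icc]
      constructor
      · linarith [hx.1, hrb.2, hbmem.1]
      · linarith [hx.2, hrb.2, hbmem.2]
    have h3 : μ' (Icc (-π) (3 * π)) ≤ 2 * ∫⁻ s in Ico 0 (2 * π), B s := by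
      rw [happ _ measurableSet_Icc]
      have he : ∫⁻ s in Icc (-π) (3 * π), B s = ∫⁻ s in Ico (-π) (3 * π), B s :=
        (setLIntegral_congr Ico_ae_eq_Icc).symm
      rw [he]
      have hsplit : Ico (-π) (3 * π) = Ico (-π) π ∪ Ico π (3 * π) :=
        (Ico_union_Ico_eq_Ico (by linarith) (by linarith)).symm
      rw [hsplit, lintegral_union measurableSet_Ico Ico_disjoint_Ico_same]
      have e1 : ∫⁻ s in Ico (-π) π, B s = ∫⁻ s in Ico 0 (2 * π), B s := by
        have h := lint_Ico_periodic B hB hper (-π)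
        rw [show -π + 2 * π = π by ring] at h
        exact h
      have e2 : ∫⁻ s in Ico π (3 * π), B s = ∫⁻ s in Ico 0 (2 * π), B s := by
        have h := lint_Ico_periodic B hB hper π
        rw [show π + 2 * π = 3 * π by ring] at h
        exact h
      rw [e1, e2]
      exact le_of_eq (two_mul _).symm
    calc ∑' b : u, ∫⁻ s in Metric.closedBall (b : ℝ) (r b), B s
        = μ' (⋃ b ∈ u, Metric.closedBall b (r b)) := h1.symm
      _ ≤ μ' (Icc (-π) (3 * π)) := measure_mono h2
      _ ≤ 2 * ∫⁻ s in Ico 0 (2 * π), B s := h3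
  calc volume E ≤ volume (⋃ b ∈ u, Metric.closedBall b (4 * r b)) := measure_mono hEsub
    _ ≤ ∑' b : u, volume (Metric.closedBall (b : ℝ) (4 * r b)) :=
        measure_biUnion_le volume hucnt _
    _ = ∑' b : u, ENNReal.ofReal (8 * r (b : ℝ)) := by
        refine tsum_congr fun b => ?_
        rw [Real.volume_closedBall]
        congr 1
        ring
    _ ≤ ∑' b : u, ENNReal.ofReal (4 / t) * ∫⁻ s in Metric.closedBall (b : ℝ) (r b), B s :=
        ENNReal.tsum_le_tsum fun b => hball b b.2
    _ = ENNReal.ofReal (4 / t) * ∑' b : u, ∫⁻ s in Metric.closedBall (b : ℝ) (r b), B s :=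
        ENNReal.tsum_mul_left
    _ ≤ ENNReal.ofReal (4 / t) * (2 * ∫⁻ s in Ico 0 (2 * π), B s) := mul_le_mul_right hsum _
    _ = ENNReal.ofReal (8 / t) * ∫⁻ s in Ico 0 (2 * π), B s := by
        rw [← mul_assoc]
        congr 1
        rw [← ENNReal.ofReal_ofNat 2, ← ENNReal.ofReal_mul (by positivity)]
        congr 1
        field_simp
        norm_num

lemma trunc_tendsto (w : ℝ → ℝ) (hw : ∀ s, 0 ≤ w s) (hwmeas : Measurable w)
    (hwint : IntegrableOn w (Ico 0 (2 * π)) volume) :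
    Filter.Tendsto (fun n : ℕ => ∫⁻ s in Ico 0 (2 * π),
      (ENNReal.ofReal (w s) - ENNReal.ofReal (n : ℝ))) Filter.atTop (nhds 0) := by
  have h := tendsto_lintegral_of_dominated_convergence
    (μ := volume.restrict (Ico 0 (2 * π)))
    (F := fun (n : ℕ) s => ENNReal.ofReal (w s) - ENNReal.ofReal (n : ℝ))
    (f := fun _ => 0) (fun s => ENNReal.ofReal (w s))
    (fun n => (ENNReal.measurable_ofReal.comp hwmeas).sub measurable_const)
    (fun n => ae_of_all _ fun s => tsub_le_self)
    ?_ ?_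
  · simpa using h
  · have heq : ∫⁻ s in Ico 0 (2 * π), ENNReal.ofReal (w s)
        = ∫⁻ s in Ico 0 (2 * π), ‖w s‖ₑ :=
      lintegral_congr fun s => (Real.enorm_eq_ofReal (hw s)).symm
    rw [heq]
    exact hwint.2.ne
  · refine ae_of_all _ fun s => ?_
    apply Filter.Tendsto.congr' _ tendsto_const_nhds
    filter_upwards [Filter.eventually_ge_atTop ⌈w s⌉₊] with n hn
    symm
    apply tsub_eq_zero_of_le
    apply ENNReal.ofReal_le_ofReal
    calc w s ≤ (⌈w s⌉₊ : ℝ) := Nat.le_ceil _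
      _ ≤ (n : ℝ) := by exact_mod_cast hn

theorem main_aux (α : ℝ) (hα : 1 < α)
    (φ : ℂ → ℝ)
    (w : ℝ → ℝ) (hw : ∀ θ, 0 ≤ w θ) (hwmeas : Measurable w)
    (hwint : IntegrableOn w (Ico 0 (2 * π)) volume)
    (hmaj : ∀ z ∈ unitDisc, φ z ≤
      (2 * π)⁻¹ * ∫ θ in Ico 0 (2 * π), poissonK z (Complex.exp (θ * Complex.I)) * w θ) :
    Filter.Tendsto
      (fun t : ℝ => ENNReal.ofReal t * (ENNReal.ofReal (2 * π)⁻¹ *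
        volume {θ ∈ Ico 0 (2 * π) | ENNReal.ofReal t < maxNT α φ θ}))
      Filter.atTop (nhds 0) := by
  have hπ : (0:ℝ) < π := Real.pi_pos
  rw [ENNReal.tendsto_nhds_zero]
  intro ε hε
  set C₁ : ℝ := 8 * π * (1 + 4 * α ^ 2) with hC₁def
  have hC₁ : 0 < C₁ := by positivity
  set ε' : ℝ≥0∞ := min ε 1 with hε'def
  have hε'0 : 0 < ε' := lt_min hε zero_lt_one
  have hε'top : ε' ≠ ⊤ := (lt_of_le_of_lt (min_le_right _ _) ENNReal.one_lt_top).ne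
  have hε'r : 0 < ε'.toReal := ENNReal.toReal_pos hε'0.ne' hε'top
  set δ : ℝ := ε'.toReal * (2 * π) / (16 * C₁) with hδdef
  have hδ0 : 0 < δ := by positivity
  -- choose the truncation level K
  obtain ⟨K, hK⟩ := (ENNReal.tendsto_nhds_zero.mp (trunc_tendsto w hw hwmeas hwint)
    (ENNReal.ofReal δ) (ENNReal.ofReal_pos.mpr hδ0)).exists
  set G : ℝ → ℝ≥0∞ := fun s => min (WW w s) (ENNReal.ofReal (K : ℝ)) with hGdef
  set B : ℝ → ℝ≥0∞ := fun s => WW w s - ENNReal.ofReal (K : ℝ) with hBdef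
  have hWGB : ∀ s, WW w s ≤ G s + B s := by
    intro s
    rcases le_total (WW w s) (ENNReal.ofReal (K : ℝ)) with h | h
    · rw [hGdef]
      simp only [min_eq_left h]
      exact le_self_add
    · rw [hGdef]
      simp only [min_eq_right h, hBdef]
      rw [add_comm]
      exact le_of_eq (tsub_add_cancel_of_le h).symm
  have hGmeas : Measurable G := (measurable_WW hwmeas).min measurable_const
  have hBmeas : Measurable B := (measurable_WW hwmeas).sub measurable_const
  have hBper : ∀ s, B (s + 2 * π) = B s := by
    intro s
    simp only [hBdef, WW, wrap_add]
  have hBint : ∫⁻ s in Ico 0 (2 * π), B s ≤ ENNReal.ofReal δ := by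
    refine le_trans (le_of_eq ?_) hK
    refine setLIntegral_congr_fun measurableSet_Ico (fun s hs => ?_)
    simp only [hBdef, WW, wrap_eq_self hs]
  have hpoint : ∀ θ, maxNT α φ θ ≤
      ENNReal.ofReal C₁ * (ENNReal.ofReal (K : ℝ) + mxl B θ) := by
    intro θ
    calc maxNT α φ θ ≤ ENNReal.ofReal C₁ * mxl (WW w) θ := maxNT_le_mxl hα φ w hw hwmeas hmaj θ
      _ ≤ ENNReal.ofReal C₁ * (mxl G θ + mxl B θ) :=
          mul_le_mul_right (mxl_mono_add hGmeas hWGB θ) _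
      _ ≤ ENNReal.ofReal C₁ * (ENNReal.ofReal (K : ℝ) + mxl B θ) :=
          mul_le_mul_right (add_le_add_left (mxl_le_const (fun s => min_le_right _ _) θ) _) _
  filter_upwards [Filter.eventually_ge_atTop (C₁ * (2 * K + 2))] with t ht
  have htpos : 0 < t := lt_of_lt_of_le (by positivity) ht
  set t' : ℝ := t / C₁ - K with ht'def
  have htC : 2 * (K : ℝ) + 2 ≤ t / C₁ := by
    rw [le_div_iff₀ hC₁]
    linarith [ht]
  have ht'pos : 0 < t' := by
    rw [ht'def]
    have hK0 : (0:ℝ) ≤ (K:ℝ) := Nat.cast_nonneg K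
    linarith [htC]
  have ht2 : t ≤ 2 * C₁ * t' := by
    rw [ht'def]
    have h1 : C₁ * (t / C₁) = t := by field_simp
    nlinarith [htC, hC₁, h1]
  have hsub : {θ ∈ Ico 0 (2 * π) | ENNReal.ofReal t < maxNT α φ θ}
      ⊆ {θ ∈ Ico 0 (2 * π) | ENNReal.ofReal t' < mxl B θ} := by
    intro θ hθ
    refine ⟨hθ.1, ?_⟩
    by_contra hc
    push_neg at hc
    have hchain : maxNT α φ θ ≤ ENNReal.ofReal t := by
      calc maxNT α φ θ ≤ ENNReal.ofReal C₁ * (ENNReal.ofReal (K : ℝ) + mxl B θ) := hpoint θ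
        _ ≤ ENNReal.ofReal C₁ * (ENNReal.ofReal (K : ℝ) + ENNReal.ofReal t') :=
            mul_le_mul_right (add_le_add_right hc _) _
        _ = ENNReal.ofReal (C₁ * ((K : ℝ) + t')) := by
            rw [← ENNReal.ofReal_add (Nat.cast_nonneg K) ht'pos.le,
              ← ENNReal.ofReal_mul hC₁.le]
        _ = ENNReal.ofReal t := by
            congr 1
            have hKt : (K : ℝ) + t' = t / C₁ := by rw [ht'def]; ring
            rw [hKt]
            field_simp
    exact absurd hθ.2 (not_lt.mpr hchain)
  have hreal : t * ((2 * π)⁻¹ * (8 / t' * δ)) ≤ ε'.toReal := by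
    calc t * ((2 * π)⁻¹ * (8 / t' * δ))
        ≤ (2 * C₁ * t') * ((2 * π)⁻¹ * (8 / t' * δ)) :=
          mul_le_mul_of_nonneg_right ht2 (by positivity)
      _ = ε'.toReal := by
          rw [hδdef]
          field_simp
          ring
  calc ENNReal.ofReal t * (ENNReal.ofReal (2 * π)⁻¹ *
        volume {θ ∈ Ico 0 (2 * π) | ENNReal.ofReal t < maxNT α φ θ})
      ≤ ENNReal.ofReal t * (ENNReal.ofReal (2 * π)⁻¹ *
        volume {θ ∈ Ico 0 (2 * π) | ENNReal.ofReal t' < mxl B θ}) :=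
        mul_le_mul_right (mul_le_mul_right (measure_mono hsub) _) _
    _ ≤ ENNReal.ofReal t * (ENNReal.ofReal (2 * π)⁻¹ *
        (ENNReal.ofReal (8 / t') * ∫⁻ s in Ico 0 (2 * π), B s)) :=
        mul_le_mul_right (mul_le_mul_right (weak_type B hBmeas hBper ht'pos) _) _
    _ ≤ ENNReal.ofReal t * (ENNReal.ofReal (2 * π)⁻¹ *
        (ENNReal.ofReal (8 / t') * ENNReal.ofReal δ)) :=
        mul_le_mul_right (mul_le_mul_right (mul_le_mul_right hBint _) _) _
    _ = ENNReal.ofReal (t * ((2 * π)⁻¹ * (8 / t' * δ))) := by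
        rw [← ENNReal.ofReal_mul (by positivity : (0:ℝ) ≤ 8 / t'),
          ← ENNReal.ofReal_mul (by positivity : (0:ℝ) ≤ (2 * π)⁻¹),
          ← ENNReal.ofReal_mul htpos.le]
    _ ≤ ENNReal.ofReal ε'.toReal := ENNReal.ofReal_le_ofReal hreal
    _ = ε' := ENNReal.ofReal_toReal hε'top
    _ ≤ ε := min_le_left _ _

end NTAux

/-- If a nonnegative function on the disc admits a quasi-bounded positive harmonic majorant
(a Poisson integral of a nonnegative `L¹` function `w`), then `t · σ{Mφ > t} → 0` as `t → ∞`. -/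
theorem maxNT_weakL1zero_of_quasibounded_majorant (α : ℝ) (hα : 1 < α)
    (φ : ℂ → ℝ) (hpos : ∀ z ∈ unitDisc, 0 ≤ φ z)
    (w : ℝ → ℝ) (hw : ∀ θ, 0 ≤ w θ) (hwint : IntegrableOn w (Ico 0 (2 * π)) volume)
    (hmaj : ∀ z ∈ unitDisc, φ z ≤
      (2 * π)⁻¹ * ∫ θ in Ico 0 (2 * π), poissonK z (Complex.exp (θ * Complex.I)) * w θ) :
    Filter.Tendsto
      (fun t : ℝ => ENNReal.ofReal t * (ENNReal.ofReal (2 * π)⁻¹ *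
        volume {θ ∈ Ico 0 (2 * π) | ENNReal.ofReal t < maxNT α φ θ}))
      Filter.atTop (nhds 0) := by
  have hsm := hwint.aestronglyMeasurable
  set v : ℝ → ℝ := hsm.mk w with hvdef
  set w' : ℝ → ℝ := fun s => max (v s) 0 with hw'def
  have hw'meas : Measurable w' := hsm.stronglyMeasurable_mk.measurable.max measurable_const
  have hae : w =ᵐ[volume.restrict (Ico 0 (2 * π))] w' := by
    filter_upwards [hsm.ae_eq_mk] with s hs
    show w s = max (v s) 0
    rw [hvdef, ← hs]
    exact (max_eq_left (hw s)).symm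
  have hw'nonneg : ∀ s, 0 ≤ w' s := fun s => le_max_right _ _
  have hw'int : IntegrableOn w' (Ico 0 (2 * π)) volume := hwint.congr hae
  have hmaj' : ∀ z ∈ unitDisc, φ z ≤
      (2 * π)⁻¹ * ∫ θ in Ico 0 (2 * π), poissonK z (Complex.exp (θ * Complex.I)) * w' θ := by
    intro z hz
    have heq : ∫ θ in Ico 0 (2 * π), poissonK z (Complex.exp (θ * Complex.I)) * w θ
        = ∫ θ in Ico 0 (2 * π), poissonK z (Complex.exp (θ * Complex.I)) * w' θ := by
      apply integral_congr_ae
      filter_upwards [hae] with s hs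
      rw [hs]
    rw [← heq]
    exact hmaj z hz
  exact NTAux.main_aux α hα φ w' hw'nonneg hw'meas hw'int hmaj'
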